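/- (Discrete comparison principle for the scheme.) Let d ≥ 1, 0 < λ ≤ Λ, h > 0, ε > 0, θ ≥ 1. Fix a grid Ω̄_h = Ω_h ∪ ∂Ω_h, Isaacs data with ellipticity constants (λ,Λ), f : Ω_h → ℝ with f ≥ 0 on Ω_h, and g : ∂Ω_h → ℝ, and let G_h be the associated scheme. If u, w : Ω̄_h → ℝ are grid functions satisfying G_h(u, x) ≤ 0 ≤ G_h(w, x) for every x ∈ Ω̄_h, then u(x) ≤ w(x) for every x ∈ Ω̄_h. -/

import Mathlib

open scoped BigOperators
open MeasureTheory
open scoped Classical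

noncomputable section

namespace Paper

/-- `ℝᵈ` with the Euclidean structure. -/
abbrev E (d : ℕ) := EuclideanSpace ℝ (Fin d)

/-- The standard basis vector `eᵢ` of `ℝᵈ`. -/
def e (d : ℕ) (i : Fin d) : E d := EuclideanSpace.single i 1

/-- For a symmetric matrix, the maximum of the absolute values of its eigenvalues. -/
def specNorm {d : ℕ} (M : Matrix (Fin d) (Fin d) ℝ) : ℝ :=
  if h : M.IsHermitian then ⨆ i, |h.eigenvalues i| else 0

/-- `(λ,Λ)`-uniform ellipticity of `F : S(d) → ℝ`. -/
def UniformlyElliptic (d : ℕ) (lam Lam : ℝ) (F : Matrix (Fin d) (Fin d) ℝ → ℝ) : Prop :=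
  ∀ M N : Matrix (Fin d) (Fin d) ℝ, M.IsHermitian → N.PosSemidef →
    lam * specNorm N ≤ F M - F (M + N) ∧ F M - F (M + N) ≤ Lam * specNorm N

/-- The upwind discretisation `|D_h u (x)|²`. -/
def upwindSq (d : ℕ) (h : ℝ) (u : E d → ℝ) (x : E d) : ℝ :=
  (1 / h ^ 2) * ∑ i : Fin d,
    max (max (u x - u (x + h • e d i)) (u x - u (x - h • e d i))) 0 ^ 2

/-- The monotone discretisation `L_h^A u (x)` of `Tr (A D²u)`. -/
def Lh (d : ℕ) (h : ℝ) (A : Matrix (Fin d) (Fin d) ℝ) (u : E d → ℝ) (x : E d) : ℝ :=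
  (∑ i : Fin d, (A i i - ∑ j ∈ Finset.univ.erase i, |A i j|) *
      ((u (x + h • e d i) + u (x - h • e d i) - 2 * u x) / h ^ 2)) +
  ∑ i : Fin d, ∑ j ∈ Finset.univ.filter (fun j => i < j),
    (max (A i j) 0 *
        ((u (x + h • (e d i + e d j)) + u (x - h • (e d i + e d j)) - 2 * u x) / h ^ 2) +
      max (-A i j) 0 *
        ((u (x + h • (e d i - e d j)) + u (x - h • (e d i - e d j)) - 2 * u x) / h ^ 2))

/-- Diagonal dominance of a matrix. -/
def DiagDominant {d : ℕ} (A : Matrix (Fin d) (Fin d) ℝ) : Prop :=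
  ∀ i, ∑ j ∈ Finset.univ.erase i, |A i j| ≤ A i i

/-- Isaacs data with ellipticity constants `(λ, Λ)`: symmetric, diagonally dominant matrices
with `λ I ≤ A_{α,β} ≤ Λ I`. -/
def IsaacsData (d : ℕ) {ιA ιB : Type*} (lam Lam : ℝ)
    (A : ιA → ιB → Matrix (Fin d) (Fin d) ℝ) : Prop :=
  ∀ a b, (A a b).IsHermitian ∧ DiagDominant (A a b) ∧
    (A a b - lam • (1 : Matrix (Fin d) (Fin d) ℝ)).PosSemidef ∧
    (Lam • (1 : Matrix (Fin d) (Fin d) ℝ) - A a b).PosSemidef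

/-- Discretised Isaacs operator. -/
def Fh (d : ℕ) {ιA ιB : Type*} (h : ℝ) (A : ιA → ιB → Matrix (Fin d) (Fin d) ℝ)
    (u : E d → ℝ) (x : E d) : ℝ :=
  ⨆ a : ιA, ⨅ b : ιB, -(Lh d h (A a b) u x)

/-- A finite grid `Ω̄_h = Ω_h ∪ ∂Ω_h` whose interior points have all stencil points in the grid. -/
structure Grid (d : ℕ) (h : ℝ) where
  interior : Finset (E d)
  boundary : Finset (E d)
  disj : Disjoint interior boundary
  nonempty : (interior ∪ boundary).Nonempty
  stencil_ax : ∀ x ∈ interior, ∀ i : Fin d,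
    x + h • e d i ∈ interior ∪ boundary ∧ x - h • e d i ∈ interior ∪ boundary
  stencil_diag : ∀ x ∈ interior, ∀ i j : Fin d, i < j →
    x + h • (e d i + e d j) ∈ interior ∪ boundary ∧
    x - h • (e d i + e d j) ∈ interior ∪ boundary ∧
    x + h • (e d i - e d j) ∈ interior ∪ boundary ∧
    x - h • (e d i - e d j) ∈ interior ∪ boundary

/-- The finite difference scheme `G_h` for the regularised pure degenerate equation. -/
def scheme (d : ℕ) {ιA ιB : Type*} {h : ℝ} (ε θ : ℝ)
    (A : ιA → ιB → Matrix (Fin d) (Fin d) ℝ) (G : Grid d h)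
    (f g : E d → ℝ) (u : E d → ℝ) (x : E d) : ℝ :=
  if x ∈ G.interior then
    ε * u x + Fh d h A u x - f x / (ε + upwindSq d h u x) ^ (θ / 2)
  else u x - g x

/-- The finite difference scheme `G_h` for the regularised free transmission problem. -/
def schemeT (d : ℕ) {ιA ιB : Type*} {h : ℝ} (ε : ℝ) (θe : ℝ → ℝ)
    (A : ιA → ιB → Matrix (Fin d) (Fin d) ℝ) (G : Grid d h)
    (f g : E d → ℝ) (u : E d → ℝ) (x : E d) : ℝ :=
  if x ∈ G.interior then
    ε * u x + Fh d h A u x - f x / (ε + upwindSq d h u x) ^ (θe (u x) / 2)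
  else u x - g x

/-- The properties of the regularised degeneracy exponent `θ_ε` used in the transmission scheme. -/
def ThetaInterp (ε θ₁ θ₂ : ℝ) (θe : ℝ → ℝ) : Prop :=
  Monotone θe ∧ (∀ t, θ₁ ≤ θe t ∧ θe t ≤ θ₂) ∧
    (∀ t, t ≤ -ε → θe t = θ₁) ∧ (∀ t, ε ≤ t → θe t = θ₂)

/-- The Hessian matrix of `φ : ℝᵈ → ℝ` at `x`. -/
def hessianMatrix (d : ℕ) (φ : E d → ℝ) (x : E d) : Matrix (Fin d) (Fin d) ℝ :=
  Matrix.of fun i j => fderiv ℝ (fun y => fderiv ℝ φ y (e d j)) x (e d i)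

/-- The piecewise-linear interpolation `Θ_ε` between the degeneracy rates `θ₁` and `θ₂`. -/
def ThetaStep (θ₁ θ₂ ε t : ℝ) : ℝ :=
  if t ≤ -ε then θ₁
  else if t < ε then (θ₂ - θ₁) / (2 * ε) * t + (θ₁ + θ₂) / 2
  else θ₂


/-- Sum of absolute values of the stencil second differences, used for bounding `Lh`. -/
def stencilSum (d : ℕ) (h : ℝ) (v : E d → ℝ) (x : E d) : ℝ :=
  (∑ i : Fin d, |(v (x + h • e d i) + v (x - h • e d i) - 2 * v x) / h ^ 2|) +
  ∑ i : Fin d, ∑ j ∈ Finset.univ.filter (fun j => i < j),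
    (|(v (x + h • (e d i + e d j)) + v (x - h • (e d i + e d j)) - 2 * v x) / h ^ 2| +
     |(v (x + h • (e d i - e d j)) + v (x - h • (e d i - e d j)) - 2 * v x) / h ^ 2|)

lemma abs_Lh_le {d : ℕ} {Lam h : ℝ} {M : Matrix (Fin d) (Fin d) ℝ}
    (hdd : DiagDominant M) (hdiag : ∀ i, M i i ≤ Lam) (hLam : 0 ≤ Lam)
    (v : E d → ℝ) (x : E d) :
    |Lh d h M v x| ≤ Lam * stencilSum d h v x := by
  have hoff : ∀ i j : Fin d, j ≠ i → |M i j| ≤ Lam := by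
    intro i j hji
    calc |M i j| ≤ ∑ k ∈ Finset.univ.erase i, |M i k| :=
          Finset.single_le_sum (f := fun k => |M i k|) (fun k _ => abs_nonneg _)
            (Finset.mem_erase.mpr ⟨hji, Finset.mem_univ _⟩)
      _ ≤ M i i := hdd i
      _ ≤ Lam := hdiag i
  have hc1 : ∀ i : Fin d, abs (M i i - ∑ j ∈ Finset.univ.erase i, |M i j|) ≤ Lam := by
    intro i
    have h1 := hdd i
    have h2 := hdiag i
    have h3 : (0:ℝ) ≤ ∑ j ∈ Finset.univ.erase i, |M i j| :=
      Finset.sum_nonneg fun j _ => abs_nonneg _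
    rw [abs_of_nonneg (by linarith)]; linarith
  have key : ∀ (c δ : ℝ), |c| ≤ Lam → |c * δ| ≤ Lam * |δ| := by
    intro c δ hc
    rw [abs_mul]
    exact mul_le_mul_of_nonneg_right hc (abs_nonneg _)
  unfold Lh stencilSum
  rw [mul_add]
  refine (abs_add_le _ _).trans (add_le_add ?_ ?_)
  · rw [Finset.mul_sum]
    refine (Finset.abs_sum_le_sum_abs _ _).trans (Finset.sum_le_sum fun i _ => ?_)
    exact key _ _ (hc1 i)
  · rw [Finset.mul_sum]
    refine (Finset.abs_sum_le_sum_abs _ _).trans (Finset.sum_le_sum fun i _ => ?_)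
    rw [Finset.mul_sum]
    refine (Finset.abs_sum_le_sum_abs _ _).trans (Finset.sum_le_sum fun j hj => ?_)
    have hij : i < j := (Finset.mem_filter.mp hj).2
    have hji : j ≠ i := (ne_of_gt hij)
    have hb : |M i j| ≤ Lam := hoff i j hji
    have hb1 : |max (M i j) 0| ≤ Lam := by
      rw [abs_of_nonneg (le_max_right _ _)]
      exact max_le ((le_abs_self _).trans hb) hLam
    have hb2 : |max (-M i j) 0| ≤ Lam := by
      rw [abs_of_nonneg (le_max_right _ _)]
      exact max_le ((neg_le_abs _).trans hb) hLam
    rw [mul_add]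
    exact (abs_add_le _ _).trans (add_le_add (key _ _ hb1) (key _ _ hb2))

/-- Discrete comparison principle: if `G_h(u, ·) ≤ 0 ≤ G_h(w, ·)`
on the whole grid, then `u ≤ w` on the grid. -/
theorem discrete_comparison {d : ℕ} (hd : 1 ≤ d) (lam Lam h ε θ : ℝ)
    (hlam : 0 < lam) (hlamLam : lam ≤ Lam) (hh : 0 < h) (hε : 0 < ε) (hθ : 1 ≤ θ)
    {ιA ιB : Type*} [Nonempty ιA] [Nonempty ιB]
    (A : ιA → ιB → Matrix (Fin d) (Fin d) ℝ) (hA : IsaacsData d lam Lam A)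
    (G : Grid d h) (f g : E d → ℝ) (hf : ∀ x ∈ G.interior, 0 ≤ f x)
    (u w : E d → ℝ)
    (hsub : ∀ x ∈ G.interior ∪ G.boundary, scheme d ε θ A G f g u x ≤ 0)
    (hsup : ∀ x ∈ G.interior ∪ G.boundary, 0 ≤ scheme d ε θ A G f g w x) :
    ∀ x ∈ G.interior ∪ G.boundary, u x ≤ w x := by
  classical
  obtain ⟨x₀, hx₀S, hx₀max⟩ :=
    (G.interior ∪ G.boundary).exists_max_image (fun y => u y - w y) G.nonempty
  suffices hmax : u x₀ ≤ w x₀ by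
    intro x hx
    have := hx₀max x hx
    linarith
  by_cases hxi : x₀ ∈ G.interior
  · -- interior maximum point
    have key : ∀ y ∈ G.interior ∪ G.boundary, u y - u x₀ ≤ w y - w x₀ := by
      intro y hy
      have := hx₀max y hy
      linarith
    have hh2 : (0:ℝ) < h ^ 2 := by positivity
    -- second-difference comparison at the max point
    have sd : ∀ v : E d, x₀ + h • v ∈ G.interior ∪ G.boundary →
        x₀ - h • v ∈ G.interior ∪ G.boundary →
        (u (x₀ + h • v) + u (x₀ - h • v) - 2 * u x₀) / h ^ 2 ≤
        (w (x₀ + h • v) + w (x₀ - h • v) - 2 * w x₀) / h ^ 2 := by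
      intro v hp hm
      have h1 := key _ hp
      have h2 := key _ hm
      exact div_le_div_of_nonneg_right (by linarith) hh2.le |>.trans_eq rfl
    -- monotonicity of Lh at the max point
    have Lh_mono : ∀ a b, Lh d h (A a b) u x₀ ≤ Lh d h (A a b) w x₀ := by
      intro a b
      obtain ⟨hherm, hdd, hpsd1, hpsd2⟩ := hA a b
      unfold Lh
      refine add_le_add (Finset.sum_le_sum fun i _ => ?_)
        (Finset.sum_le_sum fun i _ => Finset.sum_le_sum fun j hj => ?_)
      · have hc : (0:ℝ) ≤ A a b i i - ∑ j ∈ Finset.univ.erase i, |A a b i j| := by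
          have := hdd i; linarith
        exact mul_le_mul_of_nonneg_left
          (sd (e d i) (G.stencil_ax x₀ hxi i).1 (G.stencil_ax x₀ hxi i).2) hc
      · have hij : i < j := (Finset.mem_filter.mp hj).2
        obtain ⟨s1, s2, s3, s4⟩ := G.stencil_diag x₀ hxi i j hij
        exact add_le_add
          (mul_le_mul_of_nonneg_left (sd _ s1 s2) (le_max_right _ _))
          (mul_le_mul_of_nonneg_left (sd _ s3 s4) (le_max_right _ _))
    -- uniform bound on Lh
    have hLam0 : (0:ℝ) ≤ Lam := le_trans hlam.le hlamLam
    have hdiagLam : ∀ a b i, A a b i i ≤ Lam := by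
      intro a b i
      obtain ⟨hherm, hdd, hpsd1, hpsd2⟩ := hA a b
      have := hpsd2.dotProduct_mulVec_nonneg (Pi.single i 1)
      simp [Matrix.mulVec, dotProduct, Pi.single_apply, Matrix.sub_apply,
        Matrix.smul_apply, Matrix.one_apply] at this
      linarith
    have Lh_bound : ∀ (v : E d → ℝ) (a : ιA) (b : ιB),
        |Lh d h (A a b) v x₀| ≤ Lam * stencilSum d h v x₀ := by
      intro v a b
      exact abs_Lh_le (hA a b).2.1 (hdiagLam a b) hLam0 v x₀
    -- comparison of the Isaacs operators
    have bdd : ∀ (v : E d → ℝ) (a : ιA),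
        BddBelow (Set.range fun b : ιB => -(Lh d h (A a b) v x₀)) := by
      intro v a
      refine ⟨-(Lam * stencilSum d h v x₀), ?_⟩
      rintro _ ⟨b, rfl⟩
      have := (abs_le.mp (Lh_bound v a b)).2
      simp only [neg_le_neg_iff]
      linarith [neg_le_neg this]
    have Fh_mono : Fh d h A w x₀ ≤ Fh d h A u x₀ := by
      unfold Fh
      refine ciSup_mono ?_ fun a => ?_
      · refine ⟨Lam * stencilSum d h u x₀, ?_⟩
        rintro _ ⟨a, rfl⟩
        refine ciInf_le_of_le (bdd u a) (Classical.arbitrary ιB) ?_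
        have := (abs_le.mp (Lh_bound u a (Classical.arbitrary ιB))).1
        linarith
      · exact ciInf_mono (bdd w a) fun b => by have := Lh_mono a b; linarith
    -- comparison of upwind gradients
    have hup : upwindSq d h w x₀ ≤ upwindSq d h u x₀ := by
      unfold upwindSq
      refine mul_le_mul_of_nonneg_left (Finset.sum_le_sum fun i _ => ?_) (by positivity)
      have hp := key _ (G.stencil_ax x₀ hxi i).1
      have hm := key _ (G.stencil_ax x₀ hxi i).2
      refine pow_le_pow_left₀ (le_max_right _ _) ?_ 2
      exact max_le_max (max_le_max (by linarith) (by linarith)) le_rfl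
    -- conclude from the scheme inequalities
    have h1 := hsub x₀ hx₀S
    have h2 := hsup x₀ hx₀S
    rw [scheme, if_pos hxi] at h1 h2
    have hwnn : (0:ℝ) ≤ upwindSq d h w x₀ := by
      unfold upwindSq
      exact mul_nonneg (by positivity) (Finset.sum_nonneg fun i _ => sq_nonneg _)
    have hPw : (0:ℝ) < (ε + upwindSq d h w x₀) ^ (θ / 2) :=
      Real.rpow_pos_of_pos (by linarith) _
    have hPle : (ε + upwindSq d h w x₀) ^ (θ / 2) ≤ (ε + upwindSq d h u x₀) ^ (θ / 2) :=
      Real.rpow_le_rpow (by linarith) (by linarith) (by linarith)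
    have hfd : f x₀ / (ε + upwindSq d h u x₀) ^ (θ / 2) ≤
        f x₀ / (ε + upwindSq d h w x₀) ^ (θ / 2) :=
      div_le_div_of_nonneg_left (hf x₀ hxi) hPw hPle |>.trans_eq rfl
    nlinarith [mul_pos hε hε]
  · -- boundary maximum point
    have h1 := hsub x₀ hx₀S
    have h2 := hsup x₀ hx₀S
    rw [scheme, if_neg hxi] at h1 h2
    linarith

end Paper
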